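/- Let n ≥ 1 and let f : 𝔽₂ⁿ → 𝔽₂ be a Boolean function which is plateaued of amplitude μ, i.e., there is a natural number μ such that for every α ∈ 𝔽₂ⁿ the Walsh transform satisfies W_f(α)² ∈ {0, μ²}. Then Σ_{a ∈ 𝔽₂ⁿ, a ≠ 0} Σ_{b ∈ 𝔽₂} δ_f(a,b)² = 2^(n−1)·μ² + (2ⁿ − 2)·2^(2n−1) (equivalently, the derivative imbalance satisfies NB_f = 2^(n−1)·(μ² − 2ⁿ)). -/
import Mathlib


open Finset

/-- `δ_F(a,b) = |{x : F(x+a) - F(x) = b}|`. -/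
def deltaF {G₁ G₂ : Type*} [AddCommGroup G₁] [Fintype G₁] [DecidableEq G₁]
    [AddCommGroup G₂] [DecidableEq G₂] (F : G₁ → G₂) (a : G₁) (b : G₂) : ℕ :=
  (univ.filter fun x => F (x + a) - F x = b).card

/-- The Walsh transform `W_f(α) = Σ_x (−1)^(f(x) + α·x)` of a Boolean function
`f : 𝔽₂ⁿ → 𝔽₂`. -/
def walshB {n : ℕ} (f : (Fin n → ZMod 2) → ZMod 2) (α : Fin n → ZMod 2) : ℤ :=
  ∑ x : Fin n → ZMod 2, if f x + (∑ i, α i * x i) = (0 : ZMod 2) then 1 else -1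

namespace PlateauAux

variable {n : ℕ}

def chi (c : ZMod 2) : ℤ := if c = 0 then 1 else -1

lemma chi_add (a b : ZMod 2) : chi (a + b) = chi a * chi b := by revert a b; decide

def ip (α x : Fin n → ZMod 2) : ZMod 2 := ∑ i, α i * x i

lemma ip_add_right (α x y : Fin n → ZMod 2) : ip α (x + y) = ip α x + ip α y := by
  simp [ip, mul_add, Finset.sum_add_distrib]

lemma vadd_self (x : Fin n → ZMod 2) : x + x = 0 := by
  funext i
  exact CharTwo.add_self_eq_zero _

lemma addEqZeroPi (x y : Fin n → ZMod 2) : x + y = 0 ↔ y = x := by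
  constructor
  · intro h
    funext i
    have hi : x i + y i = 0 := congrFun h i
    revert hi; generalize x i = a; generalize y i = b; revert a b; decide
  · rintro rfl; exact vadd_self _

lemma card_V : Fintype.card (Fin n → ZMod 2) = 2 ^ n := by simp

lemma sum_chi_ip (z : Fin n → ZMod 2) :
    ∑ α : Fin n → ZMod 2, chi (ip α z) = if z = 0 then 2 ^ n else 0 := by
  split_ifs with hz
  · subst hz
    simp [ip, chi, card_V]
  · obtain ⟨j, hj⟩ : ∃ j, z j ≠ 0 := by
      by_contra h; push_neg at h; exact hz (funext h)
    have hz1 : z j = 1 := by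
      have h1 : ∀ c : ZMod 2, c ≠ 0 → c = 1 := by decide
      exact h1 _ hj
    set e : Fin n → ZMod 2 := Pi.single j 1 with he
    have hipe : ip e z = 1 := by
      simp [ip, he, Pi.single_apply, ite_mul, hz1]
    have h1 : ∀ α, ip (e + α) z = 1 + ip α z := by
      intro α
      have : ip (e + α) z = ip e z + ip α z := by
        simp [ip, add_mul, Finset.sum_add_distrib]
      rw [this, hipe]
    have hneg : ∀ c : ZMod 2, chi (1 + c) = - chi c := by decide
    have key : (∑ α : Fin n → ZMod 2, chi (ip (e + α) z))
        = ∑ α : Fin n → ZMod 2, chi (ip α z) :=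
      Fintype.sum_equiv (Equiv.addLeft e) _ _ (fun α => rfl)
    have key2 : (∑ α : Fin n → ZMod 2, chi (ip (e + α) z))
        = -∑ α : Fin n → ZMod 2, chi (ip α z) := by
      rw [← Finset.sum_neg_distrib]
      exact Finset.sum_congr rfl fun α _ => by rw [h1 α, hneg]
    have := key.symm.trans key2
    linarith

lemma walsh_eq (f : (Fin n → ZMod 2) → ZMod 2) (α : Fin n → ZMod 2) :
    walshB f α = ∑ x : Fin n → ZMod 2, chi (f x + ip α x) := rfl

lemma walsh_sq (f : (Fin n → ZMod 2) → ZMod 2) (α : Fin n → ZMod 2) :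
    walshB f α ^ 2
      = ∑ p : (Fin n → ZMod 2) × (Fin n → ZMod 2),
          chi (f p.1 + f p.2) * chi (ip α (p.1 + p.2)) := by
  rw [sq, walsh_eq, Finset.sum_mul_sum, ← Finset.sum_product']
  refine Finset.sum_congr rfl fun p _ => ?_
  simp only [chi_add, ip_add_right]
  ring

lemma parseval (f : (Fin n → ZMod 2) → ZMod 2) :
    ∑ α : Fin n → ZMod 2, walshB f α ^ 2 = 2 ^ (2 * n) := by
  simp only [walsh_sq]
  rw [Finset.sum_comm]
  have h1 : ∀ p : (Fin n → ZMod 2) × (Fin n → ZMod 2),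
      (∑ α : Fin n → ZMod 2, chi (f p.1 + f p.2) * chi (ip α (p.1 + p.2)))
        = chi (f p.1 + f p.2) * (if p.2 = p.1 then 2 ^ n else 0) := by
    intro p
    rw [← Finset.mul_sum, sum_chi_ip]
    congr 1
    simp [addEqZeroPi]
  simp only [h1]
  rw [Fintype.sum_prod_type]
  simp only [mul_ite, mul_zero, Finset.sum_ite_eq', Finset.mem_univ, if_true]
  have h2 : ∀ x : Fin n → ZMod 2, f x + f x = 0 := fun x => CharTwo.add_self_eq_zero _
  have h3 : chi 0 = 1 := rfl
  simp only [h2, h3, one_mul]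
  rw [Finset.sum_const, card_univ, card_V, two_mul, pow_add]
  simp

lemma walsh_pow4 (f : (Fin n → ZMod 2) → ZMod 2) :
    ∑ α : Fin n → ZMod 2, walshB f α ^ 4
      = 2 ^ n * ∑ x : (Fin n → ZMod 2) × (Fin n → ZMod 2) × (Fin n → ZMod 2),
          chi (f x.1 + f x.2.1 + f x.2.2 + f (x.1 + x.2.1 + x.2.2)) := by
  have e4 : ∀ α, walshB f α ^ 4
      = ∑ p : (Fin n → ZMod 2) × (Fin n → ZMod 2),
          ∑ q : (Fin n → ZMod 2) × (Fin n → ZMod 2),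
            (chi (f p.1 + f p.2) * chi (f q.1 + f q.2))
              * chi (ip α (p.1 + p.2 + q.1 + q.2)) := by
    intro α
    have h : walshB f α ^ 4 = (walshB f α ^ 2) * (walshB f α ^ 2) := by ring
    rw [h, walsh_sq, Finset.sum_mul_sum]
    refine Finset.sum_congr rfl fun p _ => Finset.sum_congr rfl fun q _ => ?_
    simp only [ip_add_right, chi_add]
    ring
  simp only [e4]
  rw [Finset.sum_comm]
  have h1 : ∀ p : (Fin n → ZMod 2) × (Fin n → ZMod 2),
      (∑ α : Fin n → ZMod 2, ∑ q : (Fin n → ZMod 2) × (Fin n → ZMod 2),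
        (chi (f p.1 + f p.2) * chi (f q.1 + f q.2)) * chi (ip α (p.1 + p.2 + q.1 + q.2)))
      = ∑ q : (Fin n → ZMod 2) × (Fin n → ZMod 2),
        (chi (f p.1 + f p.2) * chi (f q.1 + f q.2))
          * (if q.2 = p.1 + p.2 + q.1 then 2 ^ n else 0) := by
    intro p
    rw [Finset.sum_comm]
    refine Finset.sum_congr rfl fun q _ => ?_
    rw [← Finset.mul_sum, sum_chi_ip]
    congr 1
    simp [addEqZeroPi]
  simp only [h1]
  have h2 : ∀ p : (Fin n → ZMod 2) × (Fin n → ZMod 2),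
      (∑ q : (Fin n → ZMod 2) × (Fin n → ZMod 2),
        (chi (f p.1 + f p.2) * chi (f q.1 + f q.2))
          * (if q.2 = p.1 + p.2 + q.1 then 2 ^ n else 0))
      = ∑ z : Fin n → ZMod 2,
          (chi (f p.1 + f p.2) * chi (f z + f (p.1 + p.2 + z))) * 2 ^ n := by
    intro p
    rw [Fintype.sum_prod_type]
    refine Finset.sum_congr rfl fun z _ => ?_
    simp only [mul_ite, mul_zero, Finset.sum_ite_eq', Finset.mem_univ, if_true]
  simp only [h2]
  rw [Finset.mul_sum]
  simp only [Fintype.sum_prod_type]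
  refine Finset.sum_congr rfl fun x _ => ?_
  refine Finset.sum_congr rfl fun y _ => ?_
  refine Finset.sum_congr rfl fun z _ => ?_
  simp only [chi_add]
  ring

def Ff (f : (Fin n → ZMod 2) → ZMod 2) (a : Fin n → ZMod 2) : ℤ :=
  ∑ x : Fin n → ZMod 2, chi (f (x + a) + f x)

def trEquiv (n : ℕ) :
    ((Fin n → ZMod 2) × (Fin n → ZMod 2) × (Fin n → ZMod 2))
      ≃ ((Fin n → ZMod 2) × (Fin n → ZMod 2) × (Fin n → ZMod 2)) where
  toFun p := (p.2.1 + p.1, p.2.1, p.2.2)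
  invFun p := (p.2.1 + p.1, p.2.1, p.2.2)
  left_inv p := by
    obtain ⟨a, x, y⟩ := p
    have h : x + (x + a) = a := by rw [← add_assoc, vadd_self, zero_add]
    simp [h]
  right_inv p := by
    obtain ⟨a, x, y⟩ := p
    have h : x + (x + a) = a := by rw [← add_assoc, vadd_self, zero_add]
    simp [h]

lemma sum_Ff_sq (f : (Fin n → ZMod 2) → ZMod 2) :
    ∑ a : Fin n → ZMod 2, Ff f a ^ 2
      = ∑ x : (Fin n → ZMod 2) × (Fin n → ZMod 2) × (Fin n → ZMod 2),
          chi (f x.1 + f x.2.1 + f x.2.2 + f (x.1 + x.2.1 + x.2.2)) := by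
  have e1 : ∀ a, Ff f a ^ 2
      = ∑ p : (Fin n → ZMod 2) × (Fin n → ZMod 2),
          chi (f (p.1 + a) + f p.1 + (f (p.2 + a) + f p.2)) := by
    intro a
    rw [sq, Ff, Finset.sum_mul_sum, ← Finset.sum_product']
    refine Finset.sum_congr rfl fun p _ => ?_
    exact (chi_add _ _).symm
  simp only [e1]
  rw [← Finset.sum_product']
  refine Fintype.sum_equiv (trEquiv n) _ _ fun p => ?_
  obtain ⟨a, x, y⟩ := p
  show chi (f (x + a) + f x + (f (y + a) + f y))
      = chi (f (x + a) + f x + f y + f (x + a + x + y))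
  congr 1
  have h1 : x + a + x + y = y + a := by
    rw [show x + a + x + y = (x + x) + (a + y) by ring, vadd_self, zero_add, add_comm]
  rw [h1]
  ring

lemma sum_zmod_two (g : ZMod 2 → ℤ) : ∑ b : ZMod 2, g b = g 0 + g 1 :=
  Fin.sum_univ_two g

lemma Ff_eq (f : (Fin n → ZMod 2) → ZMod 2) (a : Fin n → ZMod 2) :
    Ff f a = (deltaF f a 0 : ℤ) - (deltaF f a 1 : ℤ) := by
  rw [Ff]
  have h1 : ∀ x : Fin n → ZMod 2,
      chi (f (x + a) + f x)
        = (if f (x + a) - f x = 0 then (1 : ℤ) else 0)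
          - (if f (x + a) - f x = 1 then (1 : ℤ) else 0) := by
    intro x
    have h : f (x + a) + f x = f (x + a) - f x := (CharTwo.sub_eq_add _ _).symm
    rw [chi, h]
    generalize f (x + a) - f x = d
    revert d; decide
  simp only [h1]
  rw [Finset.sum_sub_distrib, Finset.sum_boole, Finset.sum_boole]
  simp [deltaF]

lemma delta_total (f : (Fin n → ZMod 2) → ZMod 2) (a : Fin n → ZMod 2) :
    deltaF f a 0 + deltaF f a 1 = 2 ^ n := by
  unfold deltaF
  have h1 : (univ.filter fun x : Fin n → ZMod 2 => f (x + a) - f x = 1)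
      = univ.filter fun x : Fin n → ZMod 2 => ¬(f (x + a) - f x = 0) := by
    apply Finset.filter_congr
    intro x _
    generalize f (x + a) - f x = d
    revert d; decide
  rw [h1, Finset.card_filter_add_card_filter_not, card_univ, card_V]

lemma delta_zero₀ (f : (Fin n → ZMod 2) → ZMod 2) : deltaF f (0 : Fin n → ZMod 2) 0 = 2 ^ n := by
  unfold deltaF
  simp [card_V]

lemma delta_zero₁ (f : (Fin n → ZMod 2) → ZMod 2) : deltaF f (0 : Fin n → ZMod 2) 1 = 0 := by
  unfold deltaF
  simp

end PlateauAux

open PlateauAux in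
theorem sum_sq_delta_plateaued {n : ℕ} (hn : 1 ≤ n)
    (f : (Fin n → ZMod 2) → ZMod 2) (μ : ℕ)
    (hplateau : ∀ α : Fin n → ZMod 2, walshB f α ^ 2 = 0 ∨ walshB f α ^ 2 = (μ : ℤ) ^ 2) :
    (∑ a ∈ univ.filter (fun a : Fin n → ZMod 2 => a ≠ 0), ∑ b : ZMod 2, (deltaF f a b) ^ 2) =
      2 ^ (n - 1) * μ ^ 2 + (2 ^ n - 2) * 2 ^ (2 * n - 1) := by
  have hV : (2 : ℤ) ^ n ≠ 0 := by positivity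
  -- fourth moment from plateau hypothesis
  have h4 : ∑ α : Fin n → ZMod 2, walshB f α ^ 4 = (μ : ℤ) ^ 2 * 2 ^ (2 * n) := by
    have hpt : ∀ α, walshB f α ^ 4 = (μ : ℤ) ^ 2 * walshB f α ^ 2 := by
      intro α
      have h : walshB f α ^ 4 = (walshB f α ^ 2) ^ 2 := by ring
      rcases hplateau α with hw | hw <;> rw [h, hw] <;> ring
    simp only [hpt]
    rw [← Finset.mul_sum, parseval]
  -- sum of squares of autocorrelations
  have hF : ∑ a : Fin n → ZMod 2, Ff f a ^ 2 = (μ : ℤ) ^ 2 * 2 ^ n := by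
    have h2 : (2 : ℤ) ^ n * ∑ a : Fin n → ZMod 2, Ff f a ^ 2
        = (2 : ℤ) ^ n * ((μ : ℤ) ^ 2 * 2 ^ n) := by
      rw [sum_Ff_sq, ← walsh_pow4, h4, two_mul, pow_add]
      ring
    exact mul_left_cancel₀ hV h2
  -- per-a identity
  have hD : ∀ a : Fin n → ZMod 2,
      2 * ((deltaF f a 0 : ℤ) ^ 2 + (deltaF f a 1 : ℤ) ^ 2)
        = Ff f a ^ 2 + 2 ^ (2 * n) := by
    intro a
    have h1 := Ff_eq f a
    have h2 : (deltaF f a 0 : ℤ) + (deltaF f a 1 : ℤ) = 2 ^ n := by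
      exact_mod_cast congrArg (Nat.cast : ℕ → ℤ) (delta_total f a)
    linear_combination (-Ff f a - (deltaF f a 0 : ℤ) + (deltaF f a 1 : ℤ)) * h1
      + ((deltaF f a 0 : ℤ) + (deltaF f a 1 : ℤ) + 2 ^ n) * h2
  -- total sum over all a
  have hsumD : 2 * ∑ a : Fin n → ZMod 2, ((deltaF f a 0 : ℤ) ^ 2 + (deltaF f a 1 : ℤ) ^ 2)
      = (μ : ℤ) ^ 2 * 2 ^ n + 2 ^ n * 2 ^ (2 * n) := by
    rw [Finset.mul_sum]
    simp only [hD]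
    rw [Finset.sum_add_distrib, hF, Finset.sum_const, card_univ, card_V]
    ring
  -- split off a = 0
  have hsplit : ∑ a : Fin n → ZMod 2, ((deltaF f a 0 : ℤ) ^ 2 + (deltaF f a 1 : ℤ) ^ 2)
      = ((2 : ℤ) ^ n) ^ 2
        + ∑ a ∈ univ.filter (fun a : Fin n → ZMod 2 => a ≠ 0),
            ((deltaF f a 0 : ℤ) ^ 2 + (deltaF f a 1 : ℤ) ^ 2) := by
    rw [show (univ.filter fun a : Fin n → ZMod 2 => a ≠ 0) = univ.erase 0 from
        Finset.filter_ne' univ 0]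
    rw [← Finset.add_sum_erase univ _ (Finset.mem_univ (0 : Fin n → ZMod 2))]
    congr 1
    rw [delta_zero₀, delta_zero₁]
    push_cast
    ring
  -- target over ℤ
  have h2le : (2 : ℕ) ≤ 2 ^ n := by
    calc (2:ℕ) = 2 ^ 1 := rfl
    _ ≤ 2 ^ n := Nat.pow_le_pow_right (by norm_num) hn
  have hgoal : (((∑ a ∈ univ.filter (fun a : Fin n → ZMod 2 => a ≠ 0),
      ∑ b : ZMod 2, (deltaF f a b) ^ 2 : ℕ)) : ℤ)
      = ((2 ^ (n - 1) * μ ^ 2 + (2 ^ n - 2) * 2 ^ (2 * n - 1) : ℕ) : ℤ) := by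
    push_cast [h2le]
    have hb : ∀ a : Fin n → ZMod 2, ∑ b : ZMod 2, (deltaF f a b : ℤ) ^ 2
        = (deltaF f a 0 : ℤ) ^ 2 + (deltaF f a 1 : ℤ) ^ 2 :=
      fun a => sum_zmod_two (fun b => (deltaF f a b : ℤ) ^ 2)
    simp only [hb]
    obtain ⟨m, rfl⟩ : ∃ m, n = 1 + m := ⟨n - 1, by omega⟩
    have e1 : 1 + m - 1 = m := by omega
    have e2 : 2 * (1 + m) - 1 = 2 * m + 1 := by omega
    rw [e1, e2]
    apply mul_left_cancel₀ (show (2 : ℤ) ≠ 0 by norm_num)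
    rw [hsplit] at hsumD
    linear_combination hsumD
  exact_mod_cast hgoal
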